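/- Let D be a positive integer with D ≡ 1 (mod 8) that is not a perfect square. Then the alternating weighted sum ∑_{0 < e < √D, e odd} (-1)^((e-1)/2) · e · σ₁((D - e²)/8) equals 0, where σ₁(n) denotes the sum of positive divisors of n. -/

import Mathlib

open PowerSeries Finset

noncomputable section JacobiAux

abbrev R := PowerSeries ℤ

def F (n : ℕ) : R := ∏ i ∈ Finset.range n, (1 - (X : R) ^ (i + 1))

lemma F_isUnit (n : ℕ) : IsUnit (F n) := by
  rw [PowerSeries.isUnit_iff_constantCoeff]
  have : constantCoeff (F n) = 1 := by simp [F, map_prod]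
  rw [this]; exact isUnit_one

lemma F_succ (n : ℕ) : F (n + 1) = F n * (1 - (X : R) ^ (n + 1)) := by
  rw [F, Finset.prod_range_succ]; rfl

def Fi (n : ℕ) : R := Ring.inverse (F n)

lemma F_mul_Fi (n : ℕ) : F n * Fi n = 1 := Ring.mul_inverse_cancel _ (F_isUnit n)

lemma Fi_zero : Fi 0 = 1 := by simp [Fi, F]

lemma F_succ_mul_Fi (n : ℕ) : F (n + 1) * Fi n = 1 - (X : R) ^ (n + 1) := by
  rw [F_succ, mul_comm (F n), mul_assoc, F_mul_Fi, mul_one]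

lemma F_succ_succ_mul_Fi (n : ℕ) :
    F (n + 2) * Fi n = (1 - (X : R) ^ (n + 1)) * (1 - (X : R) ^ (n + 2)) := by
  rw [F_succ (n+1)]
  calc F (n+1) * (1 - (X:R)^(n+1+1)) * Fi n = (F (n+1) * Fi n) * (1 - (X:R)^(n+2)) := by ring
    _ = _ := by rw [F_succ_mul_Fi]

def c (m k : ℕ) : R := if k ≤ m then F (2 * m + 1) * Fi (m - k) * Fi (m + k + 1) else 0

lemma c_eq_zero (m k : ℕ) (h : m < k) : c m k = 0 := if_neg (by omega)

lemma c_diag (m : ℕ) : c m m = 1 := by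
  rw [c, if_pos le_rfl]
  simp only [Nat.sub_self, Fi_zero, mul_one]
  have : m + m + 1 = 2 * m + 1 := by omega
  rw [this, F_mul_Fi]

lemma polyid (A B q : R) :
    (1-A^2*B^2*q^4)*(1-A^2*B^2*q^5)
      = (1+A^2*B^2*q^4)*(1-A*q)*(1-A*B^2*q^4) + A*q*(1-A*B^2*q^3)*(1-A*B^2*q^4)
        + A*B^2*q^4*(1-A)*(1-A*q) := by ring

lemma crec (m k : ℕ) :
    c (m+1) (k+1) = (1 + (X:R)^(2*m+2)) * c m (k+1) + (X:R)^(m-k) * c m k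
      + (X:R)^(m+k+3) * c m (k+2) := by
  rcases lt_trichotomy m k with h | rfl | h
  · rw [c_eq_zero (m+1) (k+1) (by omega), c_eq_zero m (k+1) (by omega),
      c_eq_zero m k (by omega), c_eq_zero m (k+2) (by omega)]
    ring
  · rw [c_eq_zero m (m+1) (by omega), c_eq_zero m (m+2) (by omega), Nat.sub_self, pow_zero,
      c_diag, c_diag]
    ring
  · -- k < m
    obtain ⟨t, rfl⟩ : ∃ t, m = k + 1 + t := ⟨m - (k+1), by omega⟩
    have hcan : IsUnit (F (t+1) * F (2*k+t+4)) := (F_isUnit _).mul (F_isUnit _)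
    apply hcan.mul_left_cancel
    have hsub1 : k + 1 + t - k = t + 1 := by omega
    have hsub2 : k + 1 + t + 1 - (k + 1) = t + 1 := by omega
    have hsub3 : k + 1 + t - (k + 1) = t := by omega
    -- LHS
    have hL : F (t+1) * F (2*k+t+4) * c (k+1+t+1) (k+1)
        = F (2*(k+1+t)+1) * ((1 - (X:R)^(2*k+2*t+4)) * (1 - (X:R)^(2*k+2*t+5))) := by
      rw [c, if_pos (by omega), hsub2]
      have h1 : 2*(k+1+t+1)+1 = (2*(k+1+t)+1) + 2 := by omega
      have h2 : k+1+t+1+(k+1)+1 = 2*k+t+4 := by omega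
      rw [h1, h2]
      calc F (t+1) * F (2*k+t+4) * (F (2*(k+1+t)+1+2) * Fi (t+1) * Fi (2*k+t+4))
          = F (2*(k+1+t)+1+2) * ((F (t+1) * Fi (t+1)) * (F (2*k+t+4) * Fi (2*k+t+4))) := by
            ring
        _ = F (2*(k+1+t)+1+2) := by rw [F_mul_Fi, F_mul_Fi]; ring
        _ = _ := by
            rw [F_succ, F_succ]
            have e1 : 2*(k+1+t)+1+1 = 2*k+2*t+4 := by omega
            rw [e1]; ring
    have hB : F (t+1) * F (2*k+t+4) * c (k+1+t) (k+1)
        = F (2*(k+1+t)+1) * ((1 - (X:R)^(t+1)) * (1 - (X:R)^(2*k+t+4))) := by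
      rw [c, if_pos (by omega), hsub3]
      have h2 : k+1+t+(k+1)+1 = 2*k+t+3 := by omega
      rw [h2]
      calc F (t+1) * F (2*k+t+4) * (F (2*(k+1+t)+1) * Fi t * Fi (2*k+t+3))
          = F (2*(k+1+t)+1) * ((F (t+1) * Fi t) * (F (2*k+t+3+1) * Fi (2*k+t+3))) := by
            have e : 2*k+t+4 = 2*k+t+3+1 := by omega
            rw [e]; ring
        _ = _ := by rw [F_succ_mul_Fi, F_succ_mul_Fi]
    have hC : F (t+1) * F (2*k+t+4) * c (k+1+t) k
        = F (2*(k+1+t)+1) * ((1 - (X:R)^(2*k+t+3)) * (1 - (X:R)^(2*k+t+4))) := by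
      rw [c, if_pos (by omega), hsub1]
      have h2 : k+1+t+k+1 = 2*k+t+2 := by omega
      rw [h2]
      calc F (t+1) * F (2*k+t+4) * (F (2*(k+1+t)+1) * Fi (t+1) * Fi (2*k+t+2))
          = F (2*(k+1+t)+1) * ((F (t+1) * Fi (t+1)) * (F (2*k+t+2+2) * Fi (2*k+t+2))) := by
            have e : 2*k+t+4 = 2*k+t+2+2 := by omega
            rw [e]; ring
        _ = _ := by
            rw [F_mul_Fi, F_succ_succ_mul_Fi]
            have e1 : 2*k+t+2+1 = 2*k+t+3 := by omega
            have e2 : 2*k+t+2+2 = 2*k+t+4 := by omega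
            rw [e1, e2]; ring
    have hD : F (t+1) * F (2*k+t+4) * c (k+1+t) (k+2)
        = F (2*(k+1+t)+1) * ((1 - (X:R)^t) * (1 - (X:R)^(t+1))) := by
      rcases Nat.eq_zero_or_pos t with rfl | ht
      · rw [c_eq_zero _ _ (by omega)]
        simp
      · obtain ⟨u, rfl⟩ : ∃ u, t = u + 1 := ⟨t - 1, by omega⟩
        rw [c, if_pos (by omega)]
        have h1 : k + 1 + (u + 1) - (k+2) = u := by omega
        have h2 : k+1+(u+1)+(k+2)+1 = 2*k+(u+1)+4 := by omega
        have h3 : u + 1 + 1 = u + 2 := by omega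
        rw [h1, h2, h3]
        calc F (u+2) * F (2*k+(u+1)+4) * (F (2*(k+1+(u+1))+1) * Fi u * Fi (2*k+(u+1)+4))
            = F (2*(k+1+(u+1))+1) * ((F (u+2) * Fi u) * (F (2*k+(u+1)+4) * Fi (2*k+(u+1)+4))) := by
              ring
          _ = _ := by
              rw [F_succ_succ_mul_Fi, F_mul_Fi]
              have e1 : u + 2 = u + 1 + 1 := by omega
              rw [e1]; ring
    have hpoly : (1 - (X:R)^(2*k+2*t+4)) * (1 - (X:R)^(2*k+2*t+5))
        = (1 + (X:R)^(2*k+2*t+4)) * (1 - (X:R)^(t+1)) * (1 - (X:R)^(2*k+t+4))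
          + (X:R)^(t+1) * (1 - (X:R)^(2*k+t+3)) * (1 - (X:R)^(2*k+t+4))
          + (X:R)^(2*k+t+4) * (1 - (X:R)^t) * (1 - (X:R)^(t+1)) := by
      ring
    have e2m : 2*(k+1+t)+2 = 2*k+2*t+4 := by omega
    have e3m : k+1+t+k+3 = 2*k+t+4 := by omega
    rw [hsub1, e2m, e3m]
    calc F (t+1) * F (2*k+t+4) * c (k+1+t+1) (k+1)
        = F (2*(k+1+t)+1) * ((1 - (X:R)^(2*k+2*t+4)) * (1 - (X:R)^(2*k+2*t+5))) := hL
      _ = (1 + (X:R)^(2*k+2*t+4)) * (F (2*(k+1+t)+1) * ((1 - (X:R)^(t+1)) * (1 - (X:R)^(2*k+t+4))))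
          + (X:R)^(t+1) * (F (2*(k+1+t)+1) * ((1 - (X:R)^(2*k+t+3)) * (1 - (X:R)^(2*k+t+4))))
          + (X:R)^(2*k+t+4) * (F (2*(k+1+t)+1) * ((1 - (X:R)^t) * (1 - (X:R)^(t+1)))) := by
          rw [hpoly]; ring
      _ = _ := by rw [← hB, ← hC, ← hD]; ring

lemma crec0 (m : ℕ) :
    c (m+1) 0 = (1 + (X:R)^(m+1) + (X:R)^(2*m+2)) * c m 0 + (X:R)^(m+2) * c m 1 := by
  have hcan : IsUnit (F (m+1) * F (m+2)) := (F_isUnit _).mul (F_isUnit _)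
  apply hcan.mul_left_cancel
  have hL : F (m+1) * F (m+2) * c (m+1) 0
      = F (2*m+1) * ((1 - (X:R)^(2*m+2)) * (1 - (X:R)^(2*m+3))) := by
    rw [c, if_pos (by omega)]
    have h1 : m+1-0 = m+1 := by omega
    have h2 : m+1+0+1 = m+2 := by omega
    have h3 : 2*(m+1)+1 = 2*m+1+2 := by omega
    rw [h1, h2, h3]
    calc F (m+1) * F (m+2) * (F (2*m+1+2) * Fi (m+1) * Fi (m+2))
        = F (2*m+1+2) * ((F (m+1) * Fi (m+1)) * (F (m+2) * Fi (m+2))) := by ring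
      _ = F (2*m+1+2) := by rw [F_mul_Fi, F_mul_Fi]; ring
      _ = _ := by
          rw [F_succ, F_succ]
          have e1 : 2*m+1+1 = 2*m+2 := by omega
          rw [e1]; ring
  have hB : F (m+1) * F (m+2) * c m 0
      = F (2*m+1) * ((1 - (X:R)^(m+1)) * (1 - (X:R)^(m+2))) := by
    rw [c, if_pos (by omega)]
    have h1 : m-0 = m := by omega
    have h2 : m+0+1 = m+1 := by omega
    rw [h1, h2]
    calc F (m+1) * F (m+2) * (F (2*m+1) * Fi m * Fi (m+1))
        = F (2*m+1) * ((F (m+1) * Fi m) * (F (m+1+1) * Fi (m+1))) := by ring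
      _ = _ := by rw [F_succ_mul_Fi, F_succ_mul_Fi]
  have hC : F (m+1) * F (m+2) * c m 1
      = F (2*m+1) * ((1 - (X:R)^m) * (1 - (X:R)^(m+1))) := by
    rcases Nat.eq_zero_or_pos m with rfl | hm
    · rw [c_eq_zero 0 1 (by omega)]
      simp
    · obtain ⟨u, rfl⟩ : ∃ u, m = u + 1 := ⟨m - 1, by omega⟩
      rw [c, if_pos (by omega)]
      have h1 : u+1-1 = u := by omega
      have h2 : u+1+1+1 = u+3 := by omega
      have h3 : u+1+2 = u+3 := by omega
      rw [h1, h2, h3]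
      calc F (u+2) * F (u+3) * (F (2*(u+1)+1) * Fi u * Fi (u+3))
          = F (2*(u+1)+1) * ((F (u+2) * Fi u) * (F (u+3) * Fi (u+3))) := by ring
        _ = _ := by
            rw [F_succ_succ_mul_Fi, F_mul_Fi]
            ring
  have hpoly : (1 - (X:R)^(2*m+2)) * (1 - (X:R)^(2*m+3))
      = (1 + (X:R)^(m+1) + (X:R)^(2*m+2)) * ((1 - (X:R)^(m+1)) * (1 - (X:R)^(m+2)))
        + (X:R)^(m+2) * ((1 - (X:R)^m) * (1 - (X:R)^(m+1))) := by ring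
  calc F (m+1) * F (m+2) * c (m+1) 0
      = F (2*m+1) * ((1 - (X:R)^(2*m+2)) * (1 - (X:R)^(2*m+3))) := hL
    _ = (1 + (X:R)^(m+1) + (X:R)^(2*m+2)) * (F (2*m+1) * ((1 - (X:R)^(m+1)) * (1 - (X:R)^(m+2))))
        + (X:R)^(m+2) * (F (2*m+1) * ((1 - (X:R)^m) * (1 - (X:R)^(m+1)))) := by
        rw [hpoly]; ring
    _ = _ := by rw [← hB, ← hC]; ring

/-- triangular numbers -/
def T (k : ℕ) : ℕ := k * (k+1) / 2

lemma two_T (k : ℕ) : 2 * T k = k * (k+1) :=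
  Nat.mul_div_cancel' (even_iff_two_dvd.mp (Nat.even_mul_succ_self k)) |>.symm ▸ rfl

lemma T_succ (k : ℕ) : T (k+1) = T k + (k+1) := by
  have h1 := two_T k
  have h2 := two_T (k+1)
  have h3 : (k+1) * (k+1+1) = k * (k+1) + 2*(k+1) := by ring
  omega

lemma T_one : T 1 = 1 := by decide

/-- the summand coefficients -/
def gam (m k : ℕ) : R := (-1)^k * c m k * X^(T k)

lemma gam_zero (m k : ℕ) (h : m < k) : gam m k = 0 := by
  rw [gam, c_eq_zero m k h]; ring

lemma gam_diag (m : ℕ) : gam m 0 = c m 0 := by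
  rw [gam]; simp [T]

lemma gamrec (m k : ℕ) (hk : k ≤ m) :
    gam (m+1) (k+1) = (1 + (X:R)^(2*m+2)) * gam m (k+1)
      - (X:R)^(m+1) * (gam m k + gam m (k+2)) := by
  obtain ⟨t, rfl⟩ : ∃ t, m = k + t := ⟨m - k, by omega⟩
  simp only [gam]
  rw [crec (k+t) k]
  have hsub : k + t - k = t := by omega
  rw [hsub]
  have h2 : T (k+2) = T k + (k+1) + (k+2) := by rw [T_succ, T_succ]
  have h1 : T (k+1) = T k + (k+1) := T_succ k
  rw [h2, h1]
  ring

lemma gamrec0 (m : ℕ) :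
    gam (m+1) 0 = (1 + (X:R)^(2*m+2)) * gam m 0
      + (X:R)^(m+1) * (gam m 0 - gam m 1) := by
  simp only [gam]
  rw [crec0 m, T_one]
  have h0 : T 0 = 0 := by decide
  rw [h0]
  ring

/-- Chebyshev-like polynomials: image of z^k + ... + z^{-k} -/
def H : ℕ → Polynomial R
  | 0 => 1
  | 1 => Polynomial.X + 1
  | (k+2) => Polynomial.X * H (k+1) - H k

lemma HX (k : ℕ) : (Polynomial.X : Polynomial R) * H (k+1) = H (k+2) + H k := by
  rw [show H (k+2) = Polynomial.X * H (k+1) - H k from rfl]; ring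

lemma HX0 : (Polynomial.X : Polynomial R) * H 0 = H 1 - H 0 := by
  rw [show H 1 = Polynomial.X + 1 from rfl, show H 0 = 1 from rfl]; ring

lemma key (m : ℕ) :
    ∏ i ∈ Finset.range m, (Polynomial.C ((1:R) + (X:R)^(2*i+2)) - Polynomial.C ((X:R)^(i+1)) * Polynomial.X)
      = ∑ k ∈ Finset.range (m+1), Polynomial.C (gam m k) * H k := by
  induction m with
  | zero =>
    rw [Finset.range_zero, Finset.prod_empty, Finset.sum_range_one, gam_diag, c_diag,
      show H 0 = 1 from rfl]
    simp
  | succ m ih =>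
    rw [Finset.prod_range_succ, ih]
    set a : ℕ → Polynomial R := fun k => Polynomial.C (gam m k) with ha
    set b : Polynomial R := Polynomial.C ((X:R)^(m+1)) with hb
    set u : Polynomial R := Polynomial.C ((1:R) + (X:R)^(2*m+2)) with hu
    have ha_top : a (m+1) = 0 := by rw [ha]; simp [gam_zero m (m+1) (by omega)]
    have ha_top2 : a (m+2) = 0 := by rw [ha]; simp [gam_zero m (m+2) (by omega)]
    -- normal form pieces
    set N : Polynomial R := ∑ k ∈ Finset.range (m+1), u * a k * H k with hN
    set M1 : Polynomial R := ∑ k ∈ Finset.range m, b * a (k+1) * H (k+2) with hM1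
    set M2 : Polynomial R := ∑ k ∈ Finset.range m, b * a (k+1) * H k with hM2
    have hLHS : (∑ k ∈ Finset.range (m+1), a k * H k) * (u - b * Polynomial.X)
        = N + b * a 0 * H 0 - b * a 0 * H 1 - M1 - M2 := by
      rw [Finset.sum_mul]
      have step1 : ∀ k ∈ Finset.range (m+1),
          a k * H k * (u - b * Polynomial.X) = u * a k * H k - b * a k * (Polynomial.X * H k) := by
        intro k _; ring
      rw [Finset.sum_congr rfl step1, Finset.sum_sub_distrib]
      have step2 : ∑ k ∈ Finset.range (m+1), b * a k * (Polynomial.X * H k)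
          = b * a 0 * H 1 - b * a 0 * H 0 + M1 + M2 := by
        rw [Finset.sum_range_succ']
        have e0 : b * a 0 * (Polynomial.X * H 0) = b * a 0 * H 1 - b * a 0 * H 0 := by
          rw [HX0]; ring
        have ek : ∀ k ∈ Finset.range m,
            b * a (k+1) * (Polynomial.X * H (k+1)) = b * a (k+1) * H (k+2) + b * a (k+1) * H k := by
          intro k _; rw [HX]; ring
        rw [Finset.sum_congr rfl ek, Finset.sum_add_distrib, e0, hM1, hM2]
        ring
      rw [step2, hN]
      ring
    rw [hLHS]
    -- now the RHS
    have hRHS : ∑ k ∈ Finset.range (m+2), Polynomial.C (gam (m+1) k) * H k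
        = N + b * a 0 * H 0 - b * a 0 * H 1 - M1 - M2 := by
      rw [Finset.sum_range_succ']
      have g0 : Polynomial.C (gam (m+1) 0) * H 0 = u * a 0 * H 0 + b * (a 0 - a 1) * H 0 := by
        rw [gamrec0]
        simp only [map_add, map_mul, map_sub, ha, hb, hu]
        ring
      have gk : ∀ k ∈ Finset.range (m+1),
          Polynomial.C (gam (m+1) (k+1)) * H (k+1)
            = u * a (k+1) * H (k+1) - b * a k * H (k+1) - b * a (k+2) * H (k+1) := by
        intro k hkmem
        rw [gamrec m k (by simpa using Nat.lt_succ_iff.mp (Finset.mem_range.mp hkmem))]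
        simp only [map_add, map_mul, map_sub, map_one, ha, hb, hu]
        ring
      rw [Finset.sum_congr rfl gk]
      have split : ∑ k ∈ Finset.range (m+1),
          (u * a (k+1) * H (k+1) - b * a k * H (k+1) - b * a (k+2) * H (k+1))
          = (∑ k ∈ Finset.range (m+1), u * a (k+1) * H (k+1))
            - (∑ k ∈ Finset.range (m+1), b * a k * H (k+1))
            - (∑ k ∈ Finset.range (m+1), b * a (k+2) * H (k+1)) := by
        rw [← Finset.sum_sub_distrib, ← Finset.sum_sub_distrib]
      rw [split]
      -- S1
      have hS1 : ∑ k ∈ Finset.range (m+1), u * a (k+1) * H (k+1)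
          = N - u * a 0 * H 0 := by
        have h1 := Finset.sum_range_succ' (fun k => u * a k * H k) (m+1)
        have h2 := Finset.sum_range_succ (fun k => u * a k * H k) (m+1)
        rw [h2] at h1
        simp only [ha_top, mul_zero, zero_mul, add_zero] at h1
        rw [← hN] at h1
        linear_combination -h1
      -- S2
      have hS2 : ∑ k ∈ Finset.range (m+1), b * a k * H (k+1)
          = b * a 0 * H 1 + M1 := by
        rw [Finset.sum_range_succ' (fun k => b * a k * H (k+1)) m, hM1]
        ring
      -- S3
      have hS3 : ∑ k ∈ Finset.range (m+1), b * a (k+2) * H (k+1)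
          = M2 - b * a 1 * H 0 := by
        have h1 := Finset.sum_range_succ' (fun k => b * a (k+1) * H k) (m+1)
        have h2 := Finset.sum_range_succ (fun k => b * a (k+1) * H k) (m+1)
        have h3 := Finset.sum_range_succ (fun k => b * a (k+1) * H k) m
        rw [h2, h3] at h1
        simp only [ha_top, ha_top2, mul_zero, zero_mul, add_zero] at h1
        rw [← hM2] at h1
        linear_combination -h1
      rw [hS1, hS2, hS3, g0]
      ring
    rw [hRHS]

lemma Heval : ∀ k : ℕ, (H k).eval 2 = ((2*k+1 : ℕ) : R) := by
  intro k
  induction k using Nat.twoStepInduction with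
  | zero => rw [show H 0 = 1 from rfl]; norm_num
  | one => rw [show H 1 = Polynomial.X + 1 from rfl]; simp; norm_num
  | more k ih1 ih2 =>
    rw [show H (k+2) = Polynomial.X * H (k+1) - H k from rfl]
    rw [Polynomial.eval_sub, Polynomial.eval_mul, Polynomial.eval_X, ih1, ih2]
    push_cast
    ring

lemma T_ge (k : ℕ) : k ≤ T k := by
  have h1 := two_T k
  nlinarith [Nat.le_refl k]

/-- Squared Euler product identity -/
lemma sqkey (m : ℕ) :
    F m ^ 2 = ∑ k ∈ Finset.range (m+1), gam m k * ((2*k+1 : ℕ) : R) := by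
  have h := congrArg (Polynomial.eval (2 : R)) (key m)
  rw [Polynomial.eval_prod, Polynomial.eval_finset_sum] at h
  have hL : ∀ i ∈ Finset.range m,
      Polynomial.eval (2:R) (Polynomial.C ((1:R) + (X:R)^(2*i+2)) - Polynomial.C ((X:R)^(i+1)) * Polynomial.X)
        = (1 - (X:R)^(i+1))^2 := by
    intro i _
    rw [Polynomial.eval_sub, Polynomial.eval_C, Polynomial.eval_mul, Polynomial.eval_C,
      Polynomial.eval_X]
    have e : 2*i+2 = (i+1) + (i+1) := by omega
    rw [e, pow_add]
    ring
  rw [Finset.prod_congr rfl hL] at h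
  have hR : ∀ k ∈ Finset.range (m+1),
      Polynomial.eval (2:R) (Polynomial.C (gam m k) * H k) = gam m k * ((2*k+1 : ℕ) : R) := by
    intro k _
    rw [Polynomial.eval_mul, Polynomial.eval_C, Heval]
  rw [Finset.sum_congr rfl hR] at h
  rw [← h, Finset.prod_pow, F]

/-- leftover products -/
def E (m k : ℕ) : R :=
  (∏ i ∈ Finset.Ico (m-k) m, (1 - (X:R)^(i+1))) * (∏ i ∈ Finset.Ico (m+k+1) (2*m+1), (1 - (X:R)^(i+1)))

lemma F_mul_Fi_of_le {a b : ℕ} (h : a ≤ b) :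
    F b * Fi a = ∏ i ∈ Finset.Ico a b, (1 - (X:R)^(i+1)) := by
  have hsplit : F b = F a * ∏ i ∈ Finset.Ico a b, (1 - (X:R)^(i+1)) := by
    rw [F, F, Finset.range_eq_Ico, ← Finset.prod_Ico_consecutive _ (Nat.zero_le a) h, Finset.range_eq_Ico]
  rw [hsplit, mul_comm (F a), mul_assoc, F_mul_Fi, mul_one]

lemma F_mul_c (m k : ℕ) (h : k ≤ m) : F m * c m k = E m k := by
  rw [c, if_pos h, E]
  calc F m * (F (2*m+1) * Fi (m-k) * Fi (m+k+1))
      = (F m * Fi (m-k)) * (F (2*m+1) * Fi (m+k+1)) := by ring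
    _ = _ := by
      rw [F_mul_Fi_of_le (by omega : m - k ≤ m), F_mul_Fi_of_le (by omega : m+k+1 ≤ 2*m+1)]

lemma prod_one_sub_pow (s : Finset ℕ) (a : ℕ) (h : ∀ i ∈ s, a ≤ i) :
    ∃ r : R, ∏ i ∈ s, (1 - (X:R)^(i+1)) = 1 + (X:R)^(a+1) * r := by
  induction s using Finset.cons_induction with
  | empty => exact ⟨0, by simp⟩
  | cons j s hj ih =>
    obtain ⟨r, hr⟩ := ih (fun i hi => h i (Finset.mem_cons.mpr (Or.inr hi)))
    have hja : a ≤ j := h j (Finset.mem_cons_self _ _)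
    obtain ⟨d, hd⟩ : ∃ d, j + 1 = (a+1) + d := ⟨j - a, by omega⟩
    refine ⟨-(X:R)^d * (1 + X^(a+1)*r) + r, ?_⟩
    rw [Finset.prod_cons, hr, hd, pow_add]
    ring

lemma E_coeff (m k d : ℕ) (hk : k ≤ m) (hd : d ≤ m - k) :
    (PowerSeries.coeff d) (E m k) = if d = 0 then 1 else 0 := by
  have h1 : ∀ i ∈ Finset.Ico (m-k) m, m - k ≤ i := fun i hi => (Finset.mem_Ico.mp hi).1
  have h2 : ∀ i ∈ Finset.Ico (m+k+1) (2*m+1), m - k ≤ i := by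
    intro i hi
    have := (Finset.mem_Ico.mp hi).1
    omega
  obtain ⟨r1, hr1⟩ := prod_one_sub_pow _ _ h1
  obtain ⟨r2, hr2⟩ := prod_one_sub_pow _ _ h2
  rw [E, hr1, hr2]
  have : (1 + (X:R)^(m-k+1) * r1) * (1 + (X:R)^(m-k+1) * r2)
      = 1 + (X:R)^(m-k+1) * (r1 + r2 + X^(m-k+1) * r1 * r2) := by ring
  rw [this, map_add, PowerSeries.coeff_X_pow_mul',
    if_neg (by omega : ¬ m - k + 1 ≤ d), add_zero]
  exact PowerSeries.coeff_one d

/-- Jacobi coefficients -/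
def Ja (n : ℕ) : ℤ := ∑ k ∈ Finset.range (n+1), (if T k = n then ((-1 : ℤ))^k * (2*(k:ℤ)+1) else 0)

lemma coeff_cube (m n : ℕ) (h : n ≤ m) :
    (PowerSeries.coeff n) (F m ^ 3) = Ja n := by
  have hc : F m ^ 3 = ∑ k ∈ Finset.range (m+1),
      (((-1 : ℤ))^k * (2*(k:ℤ)+1)) • ((X:R)^(T k) * E m k) := by
    have : F m ^ 3 = (∑ k ∈ Finset.range (m+1), gam m k * ((2*k+1 : ℕ) : R)) * F m := by
      rw [← sqkey]; ring
    rw [this, Finset.sum_mul]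
    refine Finset.sum_congr rfl (fun k hk => ?_)
    have hkm : k ≤ m := by have := Finset.mem_range.mp hk; omega
    rw [gam]
    calc (-1)^k * c m k * (X:R)^(T k) * ((2*k+1 : ℕ) : R) * F m
        = ((-1)^k * ((2*k+1 : ℕ) : R)) * ((X:R)^(T k) * (F m * c m k)) := by ring
      _ = _ := by
        rw [F_mul_c m k hkm, zsmul_eq_mul]
        push_cast
        ring
  rw [hc, map_sum]
  have hterm : ∀ k ∈ Finset.range (m+1),
      (PowerSeries.coeff n) ((((-1 : ℤ))^k * (2*(k:ℤ)+1)) • ((X:R)^(T k) * E m k))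
        = if T k = n then ((-1 : ℤ))^k * (2*(k:ℤ)+1) else 0 := by
    intro k hk
    have hkm : k ≤ m := by have := Finset.mem_range.mp hk; omega
    rw [map_zsmul, PowerSeries.coeff_X_pow_mul']
    rcases le_or_gt (T k) n with hle | hlt
    · have hbound : n - T k ≤ m - k := by have := T_ge k; omega
      rw [if_pos hle, E_coeff m k _ hkm hbound]
      rcases eq_or_ne (T k) n with he | hne
      · rw [if_pos (by omega), if_pos he]; simp
      · rw [if_neg (by omega), if_neg hne]; simp
    · rw [if_neg (by omega), if_neg (by omega)]; simp
  rw [Finset.sum_congr rfl hterm, Ja]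
  symm
  apply Finset.sum_subset
  · intro x hx
    simp only [Finset.mem_range] at *
    omega
  · intro x _ hx
    simp only [Finset.mem_range, not_lt] at hx
    rw [if_neg]
    intro hT
    have := T_ge x
    omega

lemma F_zero : F 0 = 1 := by rw [F]; simp

/-- the geometric-type series `∑ X^{jt}` -/
def Dser (j : ℕ) : R := PowerSeries.mk (fun n => if j ∣ n then 1 else 0)

lemma Dser_mul (j : ℕ) : (1 - (X:R)^(j+1)) * Dser (j+1) = 1 := by
  ext n
  rw [sub_mul, one_mul, map_sub, PowerSeries.coeff_X_pow_mul', Dser, PowerSeries.coeff_one]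
  simp only [PowerSeries.coeff_mk]
  rcases le_or_gt (j+1) n with h | h
  · have hiff : (j+1) ∣ n ↔ (j+1) ∣ (n - (j+1)) := by
      constructor
      · intro h'; exact Nat.dvd_sub h' dvd_rfl
      · intro h'
        have := Nat.dvd_add h' (dvd_refl (j+1))
        rwa [Nat.sub_add_cancel h] at this
    rw [if_pos h, if_neg (show ¬ n = 0 by omega)]
    by_cases hd : (j+1) ∣ n
    · rw [if_pos hd, if_pos (hiff.mp hd)]; ring
    · rw [if_neg hd, if_neg (fun hh => hd (hiff.mpr hh))]; ring
  · rw [if_neg (not_le.mpr h)]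
    rcases Nat.eq_zero_or_pos n with rfl | hn
    · rw [if_pos (dvd_zero _), if_pos rfl]; ring
    · have hnd : ¬ (j+1) ∣ n := fun hd => absurd (Nat.le_of_dvd hn hd) (by omega)
      rw [if_neg hnd, if_neg (show ¬ n = 0 by omega)]
      ring

/-- truncated `∑ σ(n) X^n` -/
def L (m : ℕ) : R := ∑ i ∈ Finset.range m, ((i:ℤ)+1) • ((X:R)^(i+1) * Dser (i+1))

lemma XdF (m : ℕ) : (X:R) * (d⁄dX ℤ) (F m) = -(L m) * F m := by
  induction m with
  | zero =>
    rw [F_zero, L]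
    simp
  | succ m ih =>
    rw [F_succ, Derivation.leibniz, L, Finset.sum_range_succ, ← L]
    have hdu : (d⁄dX ℤ) (1 - (X:R)^(m+1)) = -((m+1 : ℕ) • ((X:R)^m)) := by
      rw [map_sub, Derivation.map_one_eq_zero, Derivation.leibniz_pow, PowerSeries.derivative_X]
      simp
    rw [hdu]
    have expand : F m • -((m+1 : ℕ) • ((X:R)^m)) + (1 - (X:R)^(m+1)) • (d⁄dX ℤ) (F m)
        = -(((m+1 : ℕ)) : R) * (X:R)^m * F m + (1 - (X:R)^(m+1)) * (d⁄dX ℤ) (F m) := by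
      rw [smul_eq_mul, smul_eq_mul, nsmul_eq_mul]
      ring
    rw [expand, mul_add]
    have h1 : (X:R) * ((1 - (X:R)^(m+1)) * (d⁄dX ℤ) (F m))
        = (1 - (X:R)^(m+1)) * (-(L m) * F m) := by
      rw [← ih]; ring
    rw [h1]
    have h2 : ((m:ℤ)+1) • ((X:R)^(m+1) * Dser (m+1)) * (F m * (1 - (X:R)^(m+1)))
        = (((m+1 : ℕ)) : R) * ((X:R)^(m+1)) * F m * ((1 - (X:R)^(m+1)) * Dser (m+1)) := by
      rw [zsmul_eq_mul]
      push_cast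
      ring
    have h3 : -(L m + ((m:ℤ)+1) • ((X:R)^(m+1) * Dser (m+1))) * (F m * (1 - (X:R)^(m+1)))
        = -(L m) * (F m * (1 - (X:R)^(m+1)))
          - (((m+1:ℕ)) : R) * ((X:R)^(m+1)) * F m * ((1 - (X:R)^(m+1)) * Dser (m+1)) := by
      rw [neg_add, add_mul, neg_mul (((m:ℤ)+1) • ((X:R)^(m+1) * Dser (m+1)))]
      rw [h2]
      ring
    rw [h3, Dser_mul]
    push_cast
    ring

lemma XdF3 (m : ℕ) : (X:R) * (d⁄dX ℤ) (F m ^ 3) = (-3 : ℤ) • (L m * F m ^ 3) := by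
  rw [Derivation.leibniz_pow]
  have h1 : (X:R) * (3 : ℕ) • F m ^ (3-1) • (d⁄dX ℤ) (F m)
      = (3 : R) * (F m ^ 2 * ((X:R) * (d⁄dX ℤ) (F m))) := by
    rw [smul_eq_mul, nsmul_eq_mul]
    norm_num
    ring
  rw [h1, XdF, zsmul_eq_mul]
  push_cast
  ring

def cL (j : ℕ) : ℤ := if j = 0 then 0 else (ArithmeticFunction.sigma 1 j : ℤ)

lemma coeff_L (m j : ℕ) (hj : j ≤ m) : (PowerSeries.coeff j) (L m) = cL j := by
  rw [L, map_sum]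
  have hterm : ∀ i ∈ Finset.range m,
      (PowerSeries.coeff j) (((i:ℤ)+1) • ((X:R)^(i+1) * Dser (i+1)))
        = if (i+1) ∣ j ∧ i+1 ≤ j then ((i:ℤ)+1) else 0 := by
    intro i _
    rw [map_zsmul, PowerSeries.coeff_X_pow_mul']
    rcases le_or_gt (i+1) j with h | h
    · rw [if_pos h, Dser, PowerSeries.coeff_mk]
      have hiff : (i+1) ∣ (j - (i+1)) ↔ (i+1) ∣ j := by
        constructor
        · intro h'
          have := Nat.dvd_add h' (dvd_refl (i+1))
          rwa [Nat.sub_add_cancel h] at this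
        · intro h'; exact Nat.dvd_sub h' dvd_rfl
      by_cases hd : (i+1) ∣ j
      · rw [if_pos (hiff.mpr hd), if_pos ⟨hd, h⟩]; simp
      · rw [if_neg (fun hh => hd (hiff.mp hh)), if_neg (by tauto)]; simp
    · rw [if_neg (by omega), if_neg (by omega)]; simp
  rw [Finset.sum_congr rfl hterm]
  rcases Nat.eq_zero_or_pos j with rfl | hjpos
  · rw [cL]
    simp
  · rw [cL, if_neg (by omega), ArithmeticFunction.sigma_one_apply]
    rw [← Finset.sum_filter]
    push_cast
    apply Finset.sum_nbij' (fun i => i + 1) (fun d => d - 1)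
    · intro i hi
      simp only [Finset.mem_filter, Finset.mem_range] at hi
      simp only [Nat.mem_divisors]
      exact ⟨hi.2.1, by omega⟩
    · intro d hd
      simp only [Nat.mem_divisors] at hd
      have hd1 : 1 ≤ d := Nat.pos_of_dvd_of_pos hd.1 hjpos
      have hdj : d ≤ j := Nat.le_of_dvd hjpos hd.1
      simp only [Finset.mem_filter, Finset.mem_range]
      have e : d - 1 + 1 = d := by omega
      rw [e]
      exact ⟨by omega, hd.1, hdj⟩
    · intro i _; omega
    · intro d hd
      simp only [Nat.mem_divisors] at hd
      have hd1 : 1 ≤ d := Nat.pos_of_dvd_of_pos hd.1 hjpos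
      omega
    · intro i _; push_cast; ring

lemma master (w : ℕ) :
    ((w+1 : ℕ) : ℤ) * Ja (w+1) = -3 * ∑ i ∈ Finset.range (w+2), cL i * Ja (w+1-i) := by
  have h := congrArg (PowerSeries.coeff (w+1)) (XdF3 (w+1))
  rw [PowerSeries.coeff_succ_X_mul, PowerSeries.coeff_derivative,
    coeff_cube (w+1) (w+1) le_rfl, map_zsmul, PowerSeries.coeff_mul,
    Finset.Nat.sum_antidiagonal_eq_sum_range_succ_mk] at h
  have hterm : ∀ i ∈ Finset.range (w+1+1),
      (PowerSeries.coeff i) (L (w+1)) * (PowerSeries.coeff (w+1-i)) (F (w+1) ^ 3)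
        = cL i * Ja (w+1-i) := by
    intro i hi
    have hi' := Finset.mem_range.mp hi
    rw [coeff_L (w+1) i (by omega), coeff_cube (w+1) (w+1-i) (by omega)]
  rw [Finset.sum_congr rfl hterm, zsmul_eq_mul] at h
  push_cast at h ⊢
  linarith [h]

lemma Ja_ext (a b : ℕ) (h : a ≤ b) :
    Ja a = ∑ k ∈ Finset.range (b+1), (if T k = a then ((-1 : ℤ))^k * (2*(k:ℤ)+1) else 0) := by
  rw [Ja]
  apply Finset.sum_subset
  · intro x hx
    simp only [Finset.mem_range] at *
    omega
  · intro x hx hx'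
    simp only [Finset.mem_range, not_lt] at hx'
    rw [if_neg]
    intro hT
    have := T_ge x
    omega

lemma bridge (n : ℕ) :
    ∑ i ∈ Finset.range (n+1), cL i * Ja (n-i)
      = ∑ k ∈ Finset.range (n+1),
          (if T k < n then ((ArithmeticFunction.sigma 1 (n - T k) : ℤ)) * (((-1 : ℤ))^k * (2*(k:ℤ)+1)) else 0) := by
  have step1 : ∀ i ∈ Finset.range (n+1),
      cL i * Ja (n-i) = ∑ k ∈ Finset.range (n+1),
        (if T k = n - i then cL i * (((-1 : ℤ))^k * (2*(k:ℤ)+1)) else 0) := by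
    intro i hi
    have hi' := Finset.mem_range.mp hi
    rw [Ja_ext (n-i) n (by omega), Finset.mul_sum]
    exact Finset.sum_congr rfl (fun k _ => by rw [mul_ite, mul_zero])
  rw [Finset.sum_congr rfl step1, Finset.sum_comm]
  refine Finset.sum_congr rfl (fun k _ => ?_)
  by_cases hTk : T k ≤ n
  · have step2 : ∀ i ∈ Finset.range (n+1),
        (if T k = n - i then cL i * (((-1 : ℤ))^k * (2*(k:ℤ)+1)) else 0)
          = (if i = n - T k then cL i * (((-1 : ℤ))^k * (2*(k:ℤ)+1)) else 0) := by
      intro i hi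
      have hi' := Finset.mem_range.mp hi
      by_cases h : i = n - T k
      · rw [if_pos h, if_pos (by omega)]
      · rw [if_neg (by omega), if_neg h]
    rw [Finset.sum_congr rfl step2, Finset.sum_ite_eq' (Finset.range (n+1)) (n - T k)]
    rw [if_pos (Finset.mem_range.mpr (by omega))]
    rcases eq_or_lt_of_le hTk with heq | hlt
    · rw [if_neg (by omega)]
      have : n - T k = 0 := by omega
      rw [this, cL]
      simp
    · rw [if_pos hlt, cL, if_neg (by omega)]
  · rw [if_neg (by omega)]
    apply Finset.sum_eq_zero
    intro i hi
    have hi' := Finset.mem_range.mp hi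
    rw [if_neg (by omega)]

lemma odd_sq (k : ℕ) : (2*k+1) * (2*k+1) = 8 * T k + 1 := by
  have h1 := two_T k
  have h2 : (2*k+1) * (2*k+1) = 4 * (k * (k+1)) + 1 := by ring
  omega

lemma conv_eq_zero (n : ℕ) (hn : 1 ≤ n) (hns : ∀ k, T k ≠ n) :
    ∑ i ∈ Finset.range (n+1), cL i * Ja (n-i) = 0 := by
  obtain ⟨w, rfl⟩ : ∃ w, n = w + 1 := ⟨n - 1, by omega⟩
  have hJa : Ja (w+1) = 0 := by
    rw [Ja]
    apply Finset.sum_eq_zero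
    intro k _
    rw [if_neg (hns k)]
  have h := master w
  rw [hJa, mul_zero] at h
  have h' := h.symm
  set S := ∑ i ∈ Finset.range (w+1+1), cL i * Ja (w+1-i) with hS
  omega

end JacobiAux

/-- For a positive non-square integer `D ≡ 1 (mod 8)`, the alternating weighted sum
`∑_{0 < e < √D, e odd} (-1)^((e-1)/2) · e · σ₁((D - e²)/8)` vanishes.
Here `σ₁ n` is the sum of the positive divisors of `n`. -/
theorem sum_neg_one_pow_mul_sigma_eq_zero (D : ℕ) (hD : 0 < D) (hmod : D % 8 = 1)
    (hsq : ¬ IsSquare D) :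
    ∑ e ∈ Finset.filter (fun e => Odd e ∧ e ^ 2 < D) (Finset.range D),
      ((-1 : ℤ) ^ ((e - 1) / 2) * (e : ℤ) *
        (ArithmeticFunction.sigma 1 ((D - e ^ 2) / 8) : ℤ)) = 0 := by
  by_cases hD1 : D = 1
  · subst hD1
    apply Finset.sum_eq_zero
    intro e he
    simp only [Finset.mem_filter, Finset.mem_range] at he
    obtain ⟨he1, he2, -⟩ := he
    interval_cases e
    · exact absurd he2 (by decide)
  · set n := (D - 1) / 8 with hn
    have hDn : D = 8 * n + 1 := by omega
    have hn1 : 1 ≤ n := by omega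
    have hns : ∀ k, T k ≠ n := by
      intro k hTk
      apply hsq
      refine ⟨2*k+1, ?_⟩
      rw [hDn, ← hTk, odd_sq k]
    have hconv := conv_eq_zero n hn1 hns
    rw [bridge, ← Finset.sum_filter] at hconv
    have hbij : ∑ e ∈ Finset.filter (fun e => Odd e ∧ e ^ 2 < D) (Finset.range D),
        ((-1 : ℤ) ^ ((e - 1) / 2) * (e : ℤ) *
          (ArithmeticFunction.sigma 1 ((D - e ^ 2) / 8) : ℤ))
        = ∑ k ∈ Finset.filter (fun k => T k < n) (Finset.range (n+1)),
            ((ArithmeticFunction.sigma 1 (n - T k) : ℤ)) * (((-1 : ℤ))^k * (2*(k:ℤ)+1)) := by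
      apply Finset.sum_nbij' (fun e => (e-1)/2) (fun k => 2*k+1)
      · intro e he
        simp only [Finset.mem_filter, Finset.mem_range] at he ⊢
        obtain ⟨heD, ⟨k, hk⟩, he2⟩ := he
        have hk2 : (e-1)/2 = k := by omega
        have hsq' : e^2 = 8 * T k + 1 := by
          have h1 : e^2 = (2*k+1) * (2*k+1) := by rw [hk]; ring
          rw [h1, odd_sq k]
        have hTkn : T k < n := by omega
        have hkT := T_ge k
        rw [hk2]
        exact ⟨by omega, hTkn⟩
      · intro k hkmem
        simp only [Finset.mem_filter, Finset.mem_range] at hkmem ⊢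
        obtain ⟨hk1, hk2⟩ := hkmem
        have hkT := T_ge k
        refine ⟨by omega, ⟨k, rfl⟩, ?_⟩
        have h1 : (2*k+1)^2 = 8 * T k + 1 := by
          have h2 : (2*k+1)^2 = (2*k+1) * (2*k+1) := by ring
          rw [h2, odd_sq k]
        rw [h1]
        omega
      · intro e he
        simp only [Finset.mem_filter, Finset.mem_range] at he
        obtain ⟨-, ⟨k, hk⟩, -⟩ := he
        omega
      · intro k _
        omega
      · intro e he
        simp only [Finset.mem_filter, Finset.mem_range] at he
        obtain ⟨heD, ⟨k, hk⟩, he2⟩ := he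
        have hk2 : (e-1)/2 = k := by omega
        have hsq' : e^2 = 8 * T k + 1 := by
          have h1 : e^2 = (2*k+1) * (2*k+1) := by rw [hk]; ring
          rw [h1, odd_sq k]
        have hTkn : T k < n := by omega
        have hDe : (D - e^2)/8 = n - T k := by omega
        rw [hk2, hDe, hk]
        push_cast
        ring
    rw [hbij, hconv]
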